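/- arXiv:1712.07559 — 5 statements merged into one kernel-verified Lean document; each statement's English description precedes it below -/
import Mathlib

section
/- Let x and y be circular sectors in the plane with opening angles α(x), α(y) ≤ π/4, apexes p(x), p(y), and bisector directions u(x), u(y). If x and y form a mutual couple, i.e., p(x) ∈ y and p(y) ∈ x, then the counter-clockwise angle γ(u(x), u(y)) between their direction vectors satisfies |π − γ(u(x), u(y))| ≤ (α(x) + α(y))/2. -/
open Real Set

noncomputable section

abbrev E2 := EuclideanSpace ℝ (Fin 2)

/-- Euclidean inner product on the plane. -/
def iprod (x y : E2) : ℝ := inner ℝ x y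

structure Sector where
  p : E2
  u : E2
  r : ℝ
  α : ℝ
  hu : ‖u‖ = 1
  hr : 0 < r
  hα : 0 < α

def Sector.mem (c : Sector) (q : E2) : Prop :=
  dist q c.p ≤ c.r ∧ InnerProductGeometry.angle (q - c.p) c.u ≤ c.α / 2

instance : Fact (Module.finrank ℝ E2 = 2) := ⟨finrank_euclideanSpace_fin⟩

def stdOrient : Orientation ℝ E2 (Fin 2) :=
  (EuclideanSpace.basisFun (Fin 2) ℝ).toBasis.orientation

/-- Counter-clockwise angle from `u` to `v`, in `[0, 2π)`. -/
def ccw (u v : E2) : ℝ :=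
  if (stdOrient.oangle u v).toReal < 0 then (stdOrient.oangle u v).toReal + 2 * π
  else (stdOrient.oangle u v).toReal

def lineThrough (p d : E2) : Set E2 := {q | ∃ t : ℝ, q = p + t • d}

def segFrom (b d : E2) (r : ℝ) : Set E2 := {q | ∃ t : ℝ, 0 ≤ t ∧ t ≤ r ∧ q = b + t • d}

def lineSide (p d q : E2) : ℝ := (q 0 - p 0) * d 1 - (q 1 - p 1) * d 0

def acuteAngle (u v : E2) : ℝ :=
  min (InnerProductGeometry.angle u v) (π - InnerProductGeometry.angle u v)

lemma abs_pi_sub_ccw (u v : E2) :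
    |π - ccw u v| = |((stdOrient.oangle u v) - ↑π).toReal| := by
  set t := (stdOrient.oangle u v).toReal with ht
  have hI1 : -π < t := Real.Angle.neg_pi_lt_toReal _
  have hI2 : t ≤ π := Real.Angle.toReal_le_pi _
  have hco : ((t : Real.Angle)) = stdOrient.oangle u v := Real.Angle.coe_toReal _
  rw [ccw, ← ht, ← hco, ← Real.Angle.coe_sub]
  by_cases h : t < 0
  · rw [if_pos h]
    have : ((t - π : ℝ) : Real.Angle) = ((t + π : ℝ) : Real.Angle) := by
      rw [Real.Angle.angle_eq_iff_two_pi_dvd_sub]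
      exact ⟨-1, by ring⟩
    rw [this, Real.Angle.toReal_coe_eq_self_iff.2 ⟨by linarith, by linarith⟩]
    rw [abs_of_nonpos (by linarith), abs_of_nonneg (by linarith)]
    ring
  · rw [if_neg h]
    push_neg at h
    rcases eq_or_lt_of_le h with h0 | h0
    · rw [← h0]
      norm_num [Real.Angle.neg_coe_pi, Real.Angle.toReal_pi, abs_of_nonneg pi_pos.le,
        abs_of_nonneg pi_pos.le]
    · rw [Real.Angle.toReal_coe_eq_self_iff.2 ⟨by linarith [pi_pos], by linarith⟩]
      rw [abs_of_nonneg (by linarith), abs_of_nonpos (by linarith)]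
      ring

/-- Observation 1: a mutual couple of circular sectors (each with opening angle at
most π/4) has nearly opposite directions: |π − γ(u(x), u(y))| ≤ (α(x) + α(y))/2. -/
theorem mutual_couple_angle (x y : Sector)
    (hx : x.α ≤ π / 4) (hy : y.α ≤ π / 4)
    (hxy : x.mem y.p) (hyx : y.mem x.p) :
    |π - ccw x.u y.u| ≤ (x.α + y.α) / 2 := by
  obtain ⟨-, hax⟩ := hxy
  obtain ⟨-, hay⟩ := hyx
  have hux : x.u ≠ 0 := by simp [← norm_pos_iff, x.hu]
  have huy : y.u ≠ 0 := by simp [← norm_pos_iff, y.hu]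
  set d : E2 := y.p - x.p with hdd
  have hd : d ≠ 0 := by
    intro h
    rw [h, InnerProductGeometry.angle_zero_left] at hax
    have := x.hα
    have := pi_pos
    linarith
  have hnd : x.p - y.p = -d := by rw [hdd]; abel
  set o := stdOrient with ho
  -- bounds
  have h1 : |(o.oangle d x.u).toReal| ≤ x.α / 2 := by
    rw [← o.angle_eq_abs_oangle_toReal hd hux]
    exact hax
  have h2 : |(o.oangle (-d) y.u).toReal| ≤ y.α / 2 := by
    rw [← o.angle_eq_abs_oangle_toReal (neg_ne_zero.2 hd) huy]
    rw [hnd] at hay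
    exact hay
  have key : o.oangle x.u y.u - ↑π =
      ↑(-((o.oangle d x.u).toReal) + (o.oangle (-d) y.u).toReal) := by
    have hadd : o.oangle x.u d + o.oangle d y.u = o.oangle x.u y.u :=
      o.oangle_add hux hd huy
    have hneg : o.oangle (-d) y.u = o.oangle d y.u + ↑π := o.oangle_neg_left hd huy
    have hrev : o.oangle x.u d = - o.oangle d x.u := (o.oangle_rev d x.u)
    rw [Real.Angle.coe_add, Real.Angle.coe_neg, Real.Angle.coe_toReal, Real.Angle.coe_toReal]
    have hdy : o.oangle d y.u = o.oangle (-d) y.u - ↑π := by rw [hneg]; abel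
    have hpipi : ((π : ℝ) : Real.Angle) + ((π : ℝ) : Real.Angle) = 0 := by
      rw [← Real.Angle.coe_add, ← two_mul, Real.Angle.coe_two_pi]
    rw [← hadd, hrev, hdy]
    have : -o.oangle d x.u + (o.oangle (-d) y.u - ↑π) - ↑π =
        -o.oangle d x.u + o.oangle (-d) y.u - (↑π + ↑π) := by abel
    rw [this, hpipi, sub_zero]
  rw [abs_pi_sub_ccw, key]
  have hπ := pi_pos
  have hb1 : |(o.oangle d x.u).toReal| ≤ π / 8 := le_trans h1 (by linarith)
  have hb2 : |(o.oangle (-d) y.u).toReal| ≤ π / 8 := le_trans h2 (by linarith)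
  rw [Real.Angle.toReal_coe_eq_self_iff.2]
  · have := abs_add_le (-((o.oangle d x.u).toReal)) ((o.oangle (-d) y.u).toReal)
    rw [abs_neg] at this
    linarith
  · constructor
    · nlinarith [abs_le.1 hb1, abs_le.1 hb2]
    · nlinarith [abs_le.1 hb1, abs_le.1 hb2]
end
end

section
/- Let v be a unit vector and let x be a circular sector with opening angle α(x) ≤ π/4 and direction u(x) satisfying |π − γ(u(x), v)| ≤ α(x) (where γ is the counter-clockwise angle). If q is any point contained in x, then the projection of q onto the directed line through p(x) in direction v is not greater (along v) than the projection of p(x) plus r(x)·sin(α(x)); in particular, no point of x projects strictly more than distance r(x) ahead of p(x) along v, since every point z of x satisfies ⟨z − p(x), v⟩ ≤ r(x)·cos(π − γ(u(x), v) − α(x)/2) ≤ 0 when π − γ(u(x), v) − α(x)/2 ≥ π/2. -/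
open Real Set

noncomputable section

lemma aux_toReal_abs {s : ℝ} (h1 : π / 2 ≤ s) (h2 : s ≤ 3 * π / 2) :
    π / 2 ≤ |((s : Real.Angle)).toReal| := by
  have hπ := Real.pi_pos
  by_cases h : s ≤ π
  · rw [Real.Angle.toReal_coe_eq_self_iff.2 ⟨by linarith, h⟩, abs_of_nonneg (by linarith)]
    exact h1
  · have hcoe : (s : Real.Angle) = ((s - 2 * π : ℝ) : Real.Angle) := by
      rw [Real.Angle.coe_sub, Real.Angle.coe_two_pi, sub_zero]
    rw [hcoe, Real.Angle.toReal_coe_eq_self_iff.2 ⟨by linarith, by linarith⟩,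
      abs_of_nonpos (by linarith)]
    linarith

/-- If the direction of a sector `x` (opening angle ≤ π/4) nearly opposes a unit
vector `v`, i.e. |π − γ(u(x), v)| ≤ α(x), then every point of `x` projects at most
r(x)·sin α(x) ahead of the apex along `v`; and if π − γ(u(x), v) − α(x)/2 ≥ π/2 then
every point of `x` projects non-positively along `v`. -/
theorem sector_projection_bound (x : Sector) (v : E2) (hv : ‖v‖ = 1)
    (hα : x.α ≤ π / 4)
    (hdir : |π - ccw x.u v| ≤ x.α) :
    (∀ q, x.mem q → iprod (q - x.p) v ≤ x.r * Real.sin x.α) ∧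
    (π / 2 ≤ π - ccw x.u v - x.α / 2 →
      ∀ q, x.mem q → iprod (q - x.p) v ≤ 0) := by
  have hπ := Real.pi_pos
  have hα0 := x.hα
  have hvne : v ≠ 0 := fun h => by simp [h] at hv
  have hune : x.u ≠ 0 := fun h => by have := x.hu; simp [h] at this
  have hccw := abs_le.1 hdir
  set θ := (stdOrient.oangle x.u v).toReal with hθdef
  have hθ_le : |θ| ≤ π := Real.Angle.abs_toReal_le_pi _
  have hθ_ge : π - x.α ≤ |θ| := by
    unfold ccw at hccw
    by_cases hneg : θ < 0
    · rw [if_pos hneg] at hccw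
      rw [abs_of_neg hneg]; linarith [hccw.2]
    · rw [if_neg hneg] at hccw
      rw [abs_of_nonneg (not_lt.1 hneg)]; linarith [hccw.1]
  have key : ∀ q, x.mem q → iprod (q - x.p) v ≤ 0 := by
    rintro q ⟨hdist, hang⟩
    by_cases hz : q - x.p = 0
    · simp [iprod, hz]
    set z := q - x.p with hzdef
    set β := (stdOrient.oangle z x.u).toReal with hβdef
    have hβ : |β| ≤ x.α / 2 := by
      rw [← stdOrient.angle_eq_abs_oangle_toReal hz hune]
      exact hang
    have hβle := abs_le.1 hβ
    -- the oriented angle from z to v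
    have hadd : stdOrient.oangle z v = ((β + θ : ℝ) : Real.Angle) := by
      rw [← stdOrient.oangle_add hz hune hvne, Real.Angle.coe_add, hβdef, hθdef,
        Real.Angle.coe_toReal, Real.Angle.coe_toReal]
    have hangle_ge : π / 2 ≤ InnerProductGeometry.angle z v := by
      by_cases hneg : θ < 0
      · -- use the reversed angle
        have habs : -θ ≤ π := by rw [abs_of_neg hneg] at hθ_le; linarith
        have habs' : π - x.α ≤ -θ := by rw [abs_of_neg hneg] at hθ_ge; linarith
        have hrev : stdOrient.oangle v z = ((-(β + θ) : ℝ) : Real.Angle) := by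
          rw [stdOrient.oangle_rev, hadd, ← Real.Angle.coe_neg]
        have := stdOrient.angle_eq_abs_oangle_toReal hvne hz
        rw [InnerProductGeometry.angle_comm, this, hrev]
        exact aux_toReal_abs (by linarith) (by linarith)
      · have habs : θ ≤ π := by rw [abs_of_nonneg (not_lt.1 hneg)] at hθ_le; linarith
        have habs' : π - x.α ≤ θ := by rw [abs_of_nonneg (not_lt.1 hneg)] at hθ_ge; linarith
        rw [stdOrient.angle_eq_abs_oangle_toReal hz hvne, hadd]
        exact aux_toReal_abs (by linarith) (by linarith)
    have hcos : Real.cos (InnerProductGeometry.angle z v) ≤ 0 :=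
      Real.cos_nonpos_of_pi_div_two_le_of_le hangle_ge
        (by linarith [InnerProductGeometry.angle_le_pi z v])
    have := InnerProductGeometry.cos_angle_mul_norm_mul_norm z v
    have hnn : (0:ℝ) ≤ ‖z‖ * ‖v‖ := by positivity
    calc iprod z v = Real.cos (InnerProductGeometry.angle z v) * (‖z‖ * ‖v‖) := this.symm
      _ ≤ 0 := mul_nonpos_of_nonpos_of_nonneg hcos hnn
  refine ⟨fun q hq => ?_, fun _ => key⟩
  have hsin : 0 ≤ Real.sin x.α := Real.sin_nonneg_of_nonneg_of_le_pi (le_of_lt hα0) (by linarith)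
  have := key q hq
  nlinarith [x.hr]
end
end

section
/- Let l be a circular sector with opening angle α(l) ≤ π/4 and let a₁, …, aₙ be circular sectors each with opening angle at most π/4 such that: p(aᵢ) ∈ l for all i; p(aᵢ) ∈ aⱼ for all 1 ≤ i < j ≤ n; and p(l) ∈ aⱼ for all j. Then the orthogonal projections of the apexes p(a₁), …, p(aₙ) onto the directed line through p(l) with direction u(l) occur in the order p(a₁), p(a₂), …, p(aₙ) (non-decreasing in the direction u(l)). -/
open Real Set

noncomputable section

set_option maxHeartbeats 800000 in
lemma key_inner {a b v : E2} {ca cb : ℝ} (hv : ‖v‖ = 1)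
    (hca0 : 0 ≤ ca) (hca1 : ca ≤ 1) (hcb0 : 0 ≤ cb) (hcb1 : cb ≤ 1)
    (ha : ca * ‖a‖ ≤ inner ℝ a v) (hb : cb * ‖b‖ ≤ inner ℝ b v) :
    (ca * cb - Real.sqrt (1 - ca ^ 2) * Real.sqrt (1 - cb ^ 2)) * (‖a‖ * ‖b‖)
      ≤ (inner ℝ a b : ℝ) := by
  set s := (inner ℝ a v : ℝ) with hs
  set t := (inner ℝ b v : ℝ) with ht
  set a' := a - s • v with ha'
  set b' := b - t • v with hb'
  have hvv : (inner ℝ v v : ℝ) = 1 := by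
    rw [real_inner_self_eq_norm_sq, hv]; norm_num
  have hab : (inner ℝ a b : ℝ) = s * t + inner ℝ a' b' := by
    simp only [ha', hb', inner_sub_left, inner_sub_right, inner_smul_left, inner_smul_right,
      RCLike.conj_to_real, hvv, real_inner_comm b v, ← ht, ← hs]
    ring
  have hna : ‖a'‖ ^ 2 = ‖a‖ ^ 2 - s ^ 2 := by
    rw [ha', norm_sub_sq_real, inner_smul_right, norm_smul, ← hs]
    simp [hv, mul_pow]; ring
  have hnb : ‖b'‖ ^ 2 = ‖b‖ ^ 2 - t ^ 2 := by
    rw [hb', norm_sub_sq_real, inner_smul_right, norm_smul, ← ht]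
    simp [hv, mul_pow]; ring
  have hsa : ca ^ 2 * ‖a‖ ^ 2 ≤ s ^ 2 := by
    have h0 : 0 ≤ ca * ‖a‖ := mul_nonneg hca0 (norm_nonneg a)
    nlinarith
  have hsb : cb ^ 2 * ‖b‖ ^ 2 ≤ t ^ 2 := by
    have h0 : 0 ≤ cb * ‖b‖ := mul_nonneg hcb0 (norm_nonneg b)
    nlinarith
  have hca2 : 0 ≤ 1 - ca ^ 2 := by nlinarith
  have hcb2 : 0 ≤ 1 - cb ^ 2 := by nlinarith
  have hna' : ‖a'‖ ≤ Real.sqrt (1 - ca ^ 2) * ‖a‖ := by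
    have h1 : Real.sqrt (1 - ca ^ 2) * ‖a‖ = Real.sqrt ((1 - ca ^ 2) * ‖a‖ ^ 2) := by
      rw [Real.sqrt_mul hca2, Real.sqrt_sq (norm_nonneg a)]
    rw [h1, ← Real.sqrt_sq (norm_nonneg a')]
    exact Real.sqrt_le_sqrt (by nlinarith)
  have hnb' : ‖b'‖ ≤ Real.sqrt (1 - cb ^ 2) * ‖b‖ := by
    have h1 : Real.sqrt (1 - cb ^ 2) * ‖b‖ = Real.sqrt ((1 - cb ^ 2) * ‖b‖ ^ 2) := by
      rw [Real.sqrt_mul hcb2, Real.sqrt_sq (norm_nonneg b)]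
    rw [h1, ← Real.sqrt_sq (norm_nonneg b')]
    exact Real.sqrt_le_sqrt (by nlinarith)
  have hcs : -(‖a'‖ * ‖b'‖) ≤ (inner ℝ a' b' : ℝ) := neg_le_of_abs_le (abs_real_inner_le_norm a' b')
  have hst : ca * ‖a‖ * (cb * ‖b‖) ≤ s * t := by
    have h1 : 0 ≤ ca * ‖a‖ := mul_nonneg hca0 (norm_nonneg a)
    have h2 : 0 ≤ cb * ‖b‖ := mul_nonneg hcb0 (norm_nonneg b)
    exact mul_le_mul ha hb h2 (le_trans h1 ha)
  have hprod : ‖a'‖ * ‖b'‖ ≤ (Real.sqrt (1-ca^2) * ‖a‖) * (Real.sqrt (1-cb^2) * ‖b‖) :=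
    mul_le_mul hna' hnb' (norm_nonneg b') (mul_nonneg (Real.sqrt_nonneg _) (norm_nonneg a))
  rw [hab]
  nlinarith [hcs, hprod, hst]

/-- From membership in a sector with small opening angle, a cosine lower bound. -/
lemma sector_inner {c : Sector} {q : E2} (hc : c.α ≤ π / 4) (h : c.mem q) :
    Real.cos (π / 8) * ‖q - c.p‖ ≤ (inner ℝ (q - c.p) c.u : ℝ) := by
  have hang : InnerProductGeometry.angle (q - c.p) c.u ≤ π / 8 := le_trans h.2 (by linarith)
  have hcos : Real.cos (π / 8) ≤ Real.cos (InnerProductGeometry.angle (q - c.p) c.u) :=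
    Real.cos_le_cos_of_nonneg_of_le_pi (InnerProductGeometry.angle_nonneg _ _)
      (by linarith [Real.pi_pos]) hang
  have := InnerProductGeometry.cos_angle_mul_norm_mul_norm (q - c.p) c.u
  rw [c.hu, mul_one] at this
  rw [← this]
  exact mul_le_mul_of_nonneg_right hcos (norm_nonneg _)

/-- Lemma 1 (ordering gadget): if each apex p(aᵢ) lies in `l`, each p(aᵢ) lies in `aⱼ`
for i < j, and p(l) lies in every `aⱼ`, then projections of the apexes onto the
directed line through p(l) with direction u(l) are in non-decreasing order. -/
theorem ordering_gadget (n : ℕ) (l : Sector) (a : Fin n → Sector)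
    (hl : l.α ≤ π / 4) (ha : ∀ i, (a i).α ≤ π / 4)
    (h1 : ∀ i, l.mem (a i).p)
    (h2 : ∀ i j : Fin n, i < j → (a j).mem (a i).p)
    (h3 : ∀ j, (a j).mem l.p) :
    ∀ i j : Fin n, i ≤ j →
      iprod ((a i).p - l.p) l.u ≤ iprod ((a j).p - l.p) l.u := by
  intro i j hij
  rcases eq_or_lt_of_le hij with rfl | hij
  · exact le_rfl
  set c8 := Real.cos (π / 8) with hc8
  have hpi := Real.pi_pos
  have hc80 : 0 ≤ c8 := Real.cos_nonneg_of_mem_Icc ⟨by linarith, by linarith⟩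
  have hc81 : c8 ≤ 1 := Real.cos_le_one _
  -- sqrt identities
  have hs8 : Real.sqrt (1 - c8 ^ 2) = Real.sin (π / 8) := by
    rw [show (1 : ℝ) - c8 ^ 2 = Real.sin (π / 8) ^ 2 by
      have := Real.sin_sq_add_cos_sq (π / 8); rw [hc8]; linarith]
    exact Real.sqrt_sq (Real.sin_nonneg_of_nonneg_of_le_pi (by linarith) (by linarith))
  set x := (a i).p - l.p with hx
  set y := (a j).p - l.p with hy
  set w := (a i).p - (a j).p with hw
  have hwxy : w = x - y := by rw [hx, hy, hw]; abel
  -- the four cosine bounds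
  have hIw : c8 * ‖w‖ ≤ (inner ℝ w ((a j).u) : ℝ) := sector_inner (ha j) (h2 i j hij)
  have hIy' : c8 * ‖y‖ ≤ (inner ℝ (-y) ((a j).u) : ℝ) := by
    have := sector_inner (ha j) (h3 j)
    have hne : l.p - (a j).p = -y := by rw [hy]; abel
    rwa [hne, norm_neg] at this
  have hIyu : c8 * ‖y‖ ≤ (inner ℝ y l.u : ℝ) := sector_inner hl (h1 j)
  -- y ≠ 0
  have hy0 : y ≠ 0 := by
    intro h0
    have := (h3 j).2
    have hne : l.p - (a j).p = -y := by rw [hy]; abel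
    rw [hne, h0, neg_zero, InnerProductGeometry.angle_zero_left] at this
    have := le_trans this (by linarith [ha j] : (a j).α / 2 ≤ π / 8)
    linarith
  have hny : 0 < ‖y‖ := norm_pos_iff.mpr hy0
  -- step 1: inner w (-y) ≥ (2 c8² - 1) ‖w‖ ‖y‖
  have step1 : (c8 * c8 - Real.sqrt (1 - c8 ^ 2) * Real.sqrt (1 - c8 ^ 2)) * (‖w‖ * ‖y‖)
      ≤ (inner ℝ w (-y) : ℝ) := by
    have := key_inner (a := w) (b := -y) ((a j).hu) hc80 hc81 hc80 hc81 hIw (by rwa [norm_neg])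
    simpa using this
  set c4 := Real.cos (π / 4) with hc4
  have hc4eq : c8 * c8 - Real.sqrt (1 - c8 ^ 2) * Real.sqrt (1 - c8 ^ 2) = c4 := by
    rw [hs8, hc4, show (π / 4 : ℝ) = π / 8 + π / 8 by ring, Real.cos_add, hc8]
  rw [hc4eq] at step1
  have hc40 : 0 ≤ c4 := Real.cos_nonneg_of_mem_Icc ⟨by linarith, by linarith⟩
  have hc41 : c4 ≤ 1 := Real.cos_le_one _
  -- normalize m = ‖y‖⁻¹ • (-y)
  set m : E2 := ‖y‖⁻¹ • (-y) with hm
  have hmn : ‖m‖ = 1 := by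
    rw [hm, norm_smul, norm_neg, norm_inv, norm_norm, inv_mul_cancel₀ (ne_of_gt hny)]
  have hwm : c4 * ‖w‖ ≤ (inner ℝ w m : ℝ) := by
    rw [hm, real_inner_smul_right, ← sub_nonneg]
    have : ‖y‖⁻¹ * (inner ℝ w (-y) : ℝ) - c4 * ‖w‖
        = ‖y‖⁻¹ * ((inner ℝ w (-y) : ℝ) - c4 * (‖w‖ * ‖y‖)) := by
      field_simp
    rw [this]
    exact mul_nonneg (by positivity) (by linarith)
  have hum : c8 * ‖(-l.u : E2)‖ ≤ (inner ℝ (-l.u) m : ℝ) := by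
    rw [norm_neg, l.hu, mul_one, hm, real_inner_smul_right, inner_neg_neg]
    have h1' : c8 * ‖y‖ ≤ (inner ℝ l.u y : ℝ) := by rwa [real_inner_comm]
    rw [← sub_nonneg]
    have : ‖y‖⁻¹ * (inner ℝ l.u y : ℝ) - c8 = ‖y‖⁻¹ * ((inner ℝ l.u y : ℝ) - c8 * ‖y‖) := by
      field_simp
    rw [this]
    exact mul_nonneg (by positivity) (by linarith)
  -- step 2
  have step2 := key_inner (a := w) (b := -l.u) hmn hc40 hc41 hc80 hc81 hwm hum
  rw [norm_neg, l.hu, mul_one, inner_neg_right] at step2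
  have hs4 : Real.sqrt (1 - c4 ^ 2) = Real.sin (π / 4) := by
    rw [show (1 : ℝ) - c4 ^ 2 = Real.sin (π / 4) ^ 2 by
      have := Real.sin_sq_add_cos_sq (π / 4); rw [hc4]; linarith]
    exact Real.sqrt_sq (Real.sin_nonneg_of_nonneg_of_le_pi (by linarith) (by linarith))
  have hc38 : c4 * c8 - Real.sqrt (1 - c4 ^ 2) * Real.sqrt (1 - c8 ^ 2)
      = Real.cos (3 * π / 8) := by
    rw [hs4, hs8, show (3 * π / 8 : ℝ) = π / 4 + π / 8 by ring, Real.cos_add, hc4, hc8]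
  rw [hc38] at step2
  have hc380 : 0 ≤ Real.cos (3 * π / 8) :=
    Real.cos_nonneg_of_mem_Icc ⟨by linarith, by linarith⟩
  have hwu : (inner ℝ w l.u : ℝ) ≤ 0 := by
    have h0 : 0 ≤ Real.cos (3 * π / 8) * ‖w‖ := mul_nonneg hc380 (norm_nonneg _)
    linarith
  -- conclude
  have : (inner ℝ w l.u : ℝ) = (inner ℝ x l.u : ℝ) - (inner ℝ y l.u : ℝ) := by
    rw [hwxy]; exact inner_sub_left x y l.u
  simp only [iprod, ← hx, ← hy]
  linarith
end
end

section
/- Let a₁, …, aₙ be circular sectors with opening angles at most π/4 and let v be a unit vector such that |π − γ(u(aⱼ), v)| ≤ π/4 for every j. Suppose there exist indices k < n such that ⟨p(a_{k−1}) − p(a_k), v⟩ > 0 and p(a_{k−1}) ∈ a_k. Then this leads to a contradiction: containment p(a_{k−1}) ∈ a_k with ⟨p(a_{k−1}) − p(a_k), v⟩ > 0 forces |π − γ(u(a_k), v)| > π/2 − α(a_k)/2 ≥ 3π/8. -/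
open Real Set

noncomputable section

set_option maxHeartbeats 1000000 in
lemma key_contra (w u v : E2) (hu : ‖u‖ = 1) (hv : ‖v‖ = 1) (hw : w ≠ 0)
    (hA : InnerProductGeometry.angle w u ≤ π / 8)
    (hB : 3 * π / 4 ≤ InnerProductGeometry.angle u v)
    (hpos : 0 < (inner ℝ w v : ℝ)) : False := by
  set A := InnerProductGeometry.angle w u with hAdef
  set B := InnerProductGeometry.angle u v with hBdef
  have hA0 : 0 ≤ A := InnerProductGeometry.angle_nonneg _ _
  have hApi : A ≤ π := InnerProductGeometry.angle_le_pi _ _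
  have hB0 : 0 ≤ B := InnerProductGeometry.angle_nonneg _ _
  have hBpi : B ≤ π := InnerProductGeometry.angle_le_pi _ _
  have hwpos : (0:ℝ) < ‖w‖ := norm_pos_iff.mpr hw
  have hwu : (inner ℝ w u : ℝ) = ‖w‖ * Real.cos A := by
    have := InnerProductGeometry.cos_angle_mul_norm_mul_norm w u
    rw [hu] at this; rw [← this]; ring
  have huv : (inner ℝ u v : ℝ) = Real.cos B := by
    have := InnerProductGeometry.cos_angle_mul_norm_mul_norm u v
    rw [hu, hv] at this; rw [← this]; ring
  set z : E2 := v - Real.cos B • u with hz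
  set w' : E2 := w - (‖w‖ * Real.cos A) • u with hw'
  have huu : (inner ℝ u u : ℝ) = 1 := by
    rw [real_inner_self_eq_norm_sq, hu]; norm_num
  have huz : (inner ℝ u z : ℝ) = 0 := by
    rw [hz, inner_sub_right, real_inner_smul_right, huv, huu]; ring
  have hsinA : 0 ≤ Real.sin A := Real.sin_nonneg_of_nonneg_of_le_pi hA0 hApi
  have hsinB : 0 ≤ Real.sin B := Real.sin_nonneg_of_nonneg_of_le_pi hB0 hBpi
  have hpyA := Real.sin_sq_add_cos_sq A
  have hpyB := Real.sin_sq_add_cos_sq B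
  have hnw' : ‖w'‖ = ‖w‖ * Real.sin A := by
    have h1 : ‖w'‖ ^ 2 = (‖w‖ * Real.sin A) ^ 2 := by
      rw [hw', norm_sub_sq_real, real_inner_smul_right, hwu, norm_smul, hu]
      simp only [Real.norm_eq_abs, mul_one]
      rw [sq_abs]
      nlinarith [sq_nonneg (‖w‖ * Real.cos A)]
    have := congrArg Real.sqrt h1
    rwa [Real.sqrt_sq (norm_nonneg _), Real.sqrt_sq (by positivity)] at this
  have hnz : ‖z‖ = Real.sin B := by
    have h1 : ‖z‖ ^ 2 = (Real.sin B) ^ 2 := by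
      have hvu : (inner ℝ v u : ℝ) = Real.cos B := by rw [real_inner_comm]; exact huv
      rw [hz, norm_sub_sq_real, real_inner_smul_right, hvu, norm_smul, hv, hu]
      simp only [Real.norm_eq_abs, mul_one]
      rw [sq_abs]
      ring_nf
      linarith [hpyB]
    have := congrArg Real.sqrt h1
    rwa [Real.sqrt_sq (norm_nonneg _), Real.sqrt_sq hsinB] at this
  have hdecomp : (inner ℝ w v : ℝ) = (inner ℝ w' z : ℝ) + Real.cos B * (‖w‖ * Real.cos A) := by
    rw [hw', hz]
    simp only [inner_sub_left, inner_sub_right, real_inner_smul_left, real_inner_smul_right,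
      hwu, huv, huu, real_inner_comm u w]
    ring
  have hcs : (inner ℝ w' z : ℝ) ≤ (‖w‖ * Real.sin A) * Real.sin B := by
    rw [← hnw', ← hnz]; exact real_inner_le_norm _ _
  have hbound : (inner ℝ w v : ℝ) ≤ ‖w‖ * Real.cos (B - A) := by
    rw [hdecomp, Real.cos_sub]; nlinarith [hcs]
  have hcosneg : Real.cos (B - A) ≤ 0 := by
    apply Real.cos_nonpos_of_pi_div_two_le_of_le
    · linarith [Real.pi_pos]
    · linarith [Real.pi_pos]
  have : ‖w‖ * Real.cos (B - A) ≤ 0 := mul_nonpos_of_nonneg_of_nonpos (norm_nonneg w) hcosneg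
  linarith

/-- Core contradiction in the ordering gadget: a sector `a k` whose direction nearly
opposes `v` (|π − γ(u(a k), v)| ≤ π/4) cannot contain a point p(a j) that projects
strictly ahead of its apex along `v`. -/
theorem ordering_gadget_contradiction (n : ℕ) (a : Fin n → Sector) (v : E2)
    (hv : ‖v‖ = 1)
    (hα : ∀ j, (a j).α ≤ π / 4)
    (hdir : ∀ j, |π - ccw (a j).u v| ≤ π / 4)
    (j k : Fin n)
    (hproj : 0 < iprod ((a j).p - (a k).p) v)
    (hmem : (a k).mem (a j).p) :
    False := by
  classical
  set u := (a k).u with hudef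
  set w := (a j).p - (a k).p with hwdef
  have hu : ‖u‖ = 1 := (a k).hu
  have hproj' : 0 < (inner ℝ w v : ℝ) := hproj
  have hw : w ≠ 0 := by
    intro h
    rw [h, inner_zero_left] at hproj'
    exact lt_irrefl 0 hproj'
  have hA : InnerProductGeometry.angle w u ≤ π / 8 := by
    have := hmem.2
    have hk := hα k
    calc InnerProductGeometry.angle w u ≤ (a k).α / 2 := this
      _ ≤ π / 8 := by linarith
  have hneu : u ≠ 0 := by
    intro h; rw [h, norm_zero] at hu; norm_num at hu
  have hnev : v ≠ 0 := by
    intro h; rw [h, norm_zero] at hv; norm_num at hv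
  have hang : InnerProductGeometry.angle u v = |(stdOrient.oangle u v).toReal| :=
    stdOrient.angle_eq_abs_oangle_toReal hneu hnev
  have hθpi : (stdOrient.oangle u v).toReal ≤ π := Real.Angle.toReal_le_pi _
  have hθgt : -π < (stdOrient.oangle u v).toReal := Real.Angle.neg_pi_lt_toReal _
  have hd := hdir k
  rw [abs_le] at hd
  unfold ccw at hd
  have hB : 3 * π / 4 ≤ InnerProductGeometry.angle u v := by
    by_cases hcase : (stdOrient.oangle u v).toReal < 0
    · rw [if_pos hcase] at hd
      rw [hang, abs_of_neg hcase]
      linarith [hd.1]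
    · rw [if_neg hcase] at hd
      rw [hang, abs_of_nonneg (not_lt.1 hcase)]
      linarith [hd.2]
  exact key_contra w u v hu hv hw hA hB hproj'
end
end

section
/- Let v be a segment direction and c a circular sector with opening angle α ≤ π/4 such that the undirected angle between u(c) and −v is at most α. If q ∈ c and ⟨q − p(c), v⟩ > 0 (q projects strictly ahead of the apex in direction v), then q = p(c); equivalently, no point of c other than the apex projects strictly ahead of the apex along v. -/
open Real Set

noncomputable section

/-- Triangle inequality for unoriented angles in the plane. -/
lemma angle_triangle_E2 {x y z : E2} (hx : x ≠ 0) (hy : y ≠ 0) (hz : z ≠ 0)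
    (hsum : InnerProductGeometry.angle x y + InnerProductGeometry.angle y z < π) :
    InnerProductGeometry.angle x z ≤
      InnerProductGeometry.angle x y + InnerProductGeometry.angle y z := by
  set o := stdOrient
  have h1 := o.angle_eq_abs_oangle_toReal hx hy
  have h2 := o.angle_eq_abs_oangle_toReal hy hz
  have h3 := o.angle_eq_abs_oangle_toReal hx hz
  set θ := (o.oangle x y).toReal with hθ
  set φ := (o.oangle y z).toReal with hφ
  have hadd : o.oangle x z = ((θ + φ : ℝ) : Real.Angle) := by
    rw [← o.oangle_add hx hy hz, ← Real.Angle.coe_toReal (o.oangle x y),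
      ← Real.Angle.coe_toReal (o.oangle y z), ← Real.Angle.coe_add]
  have habs : |θ + φ| < π := by
    calc |θ + φ| ≤ |θ| + |φ| := abs_add_le _ _
    _ < π := by rw [← h1, ← h2]; exact hsum
  have : (o.oangle x z).toReal = θ + φ := by
    rw [hadd, Real.Angle.toReal_coe_eq_self_iff]
    constructor
    · linarith [abs_lt.mp habs |>.1]
    · linarith [abs_lt.mp habs |>.2]
  rw [h3, this, h1, h2]
  exact abs_add_le _ _

/-- Monotonicity fact underlying the ordering gadget: if the direction of sector `c`
(opening angle α ≤ π/4) makes angle at most α with `−v`, then no point of `c` other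
than the apex projects strictly ahead of the apex along `v`. -/
theorem no_point_projects_ahead (c : Sector) (v : E2) (hv : ‖v‖ = 1)
    (hα : c.α ≤ π / 4)
    (hdir : InnerProductGeometry.angle c.u (-v) ≤ c.α)
    (q : E2) (hq : c.mem q) (hproj : 0 < iprod (q - c.p) v) :
    q = c.p := by
  by_contra hne
  have hw : q - c.p ≠ 0 := sub_ne_zero.mpr hne
  have hu : c.u ≠ 0 := by
    intro h
    have := c.hu
    rw [h, norm_zero] at this
    norm_num at this
  have hnv : (-v : E2) ≠ 0 := by
    intro h; apply (one_ne_zero : (1:ℝ) ≠ 0); rw [← hv, ← norm_neg, h, norm_zero]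
  have hπ : 0 < π := Real.pi_pos
  have h1 : InnerProductGeometry.angle (q - c.p) c.u ≤ c.α / 2 := hq.2
  have hαle : c.α / 2 + c.α ≤ 3 * (π/4) / 2 := by linarith
  have hsum : InnerProductGeometry.angle (q - c.p) c.u
      + InnerProductGeometry.angle c.u (-v) < π := by
    have := InnerProductGeometry.angle_nonneg (q - c.p) c.u
    linarith
  have htri := angle_triangle_E2 hw hu hnv hsum
  have hlt : InnerProductGeometry.angle (q - c.p) (-v) < π / 2 := by
    calc InnerProductGeometry.angle (q - c.p) (-v)
        ≤ _ + _ := htri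
      _ ≤ c.α / 2 + c.α := by linarith
      _ < π / 2 := by linarith
  have hcos : 0 < Real.cos (InnerProductGeometry.angle (q - c.p) (-v)) :=
    Real.cos_pos_of_mem_Ioo ⟨by linarith [InnerProductGeometry.angle_nonneg (q - c.p) (-v)],
      hlt⟩
  have hnorm : 0 < ‖q - c.p‖ * ‖(-v : E2)‖ := by
    apply mul_pos (norm_pos_iff.mpr hw) (norm_pos_iff.mpr hnv)
  have hip : (0:ℝ) < inner ℝ (q - c.p) (-v : E2) := by
    rw [← InnerProductGeometry.cos_angle_mul_norm_mul_norm]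
    exact mul_pos hcos hnorm
  rw [inner_neg_right] at hip
  have : (inner ℝ (q - c.p) v : ℝ) < 0 := by linarith
  unfold iprod at hproj
  linarith
end
end
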